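/- Let T > 0, h ∈ H¹₀([0,T],ℝ), and write √(φ^h(t)) = U(t) + iV(t) with U, V real. Then for all f, g ∈ C¹([0,T],ℝ), J_{f,g}(φ^h) = ∫₀^T (f(r)U(r) + g(r)V(r)) h'(r) dr − (1/2)∫₀^T (f(r)U(r) + g(r)V(r))² dr; in particular, J_{f,g}(φ^h) ≤ (1/2)∫₀^T h'(r)² dr. -/

import Mathlib

open MeasureTheory Set Filter

/-- The branch of the complex square root mapping `ℂ \ [0,∞)` into the open upper
half-plane; on `[0,∞)` it is the usual nonnegative real square root. -/
noncomputable def upSqrt (z : ℂ) : ℂ :=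
  if z.im = 0 ∧ 0 ≤ z.re then (Real.sqrt z.re : ℂ)
  else Complex.I * (-z) ^ ((1 : ℂ) / 2)

/-- `z ∈ ℂ \ [0,∞)`. -/
def offPosReal (z : ℂ) : Prop := ¬(z.im = 0 ∧ 0 ≤ z.re)

/-- The Cameron–Martin space `H¹₀([0,T],ℝ)`: absolutely continuous `h` with `h 0 = 0`
and derivative `dFun ∈ L²([0,T],ℝ)`, recorded via `h t = ∫₀ᵗ h'`. -/
structure CM (T : ℝ) where
  toFun : ℝ → ℝ
  dFun : ℝ → ℝ
  measurable_dFun : Measurable dFun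
  memL2 : MeasureTheory.MemLp dFun 2 (MeasureTheory.volume.restrict (Set.Ioc 0 T))
  eq_int : ∀ t ∈ Set.Icc 0 T, toFun t = ∫ s in Set.Ioc 0 t, dFun s

/-- `φ` is the solution `φ^h`: continuous on `[0,T]`, `φ 0 = 0`, valued in
`ℂ \ [0,∞)` on `(0,T]`, and `φ t = -t + 2∫₀ᵗ √(φ s) h'(s) ds`. -/
def IsPhiH (T : ℝ) (h : CM T) (φ : ℝ → ℂ) : Prop :=
  ContinuousOn φ (Set.Icc 0 T) ∧ φ 0 = 0 ∧
  (∀ t ∈ Set.Ioc 0 T, offPosReal (φ t)) ∧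
  ∀ t ∈ Set.Icc 0 T, φ t = -(t : ℂ) + 2 * ∫ s in Set.Ioc 0 t, upSqrt (φ s) * ((h.dFun s : ℝ) : ℂ)

/-- `d` is an (integrable) a.e. derivative of `φ` on `[0,T]`, i.e. `Re φ`, `Im φ` are
absolutely continuous with `φ t = ∫₀ᵗ d`. -/
def IsDensityOn (T : ℝ) (φ : ℝ → ℂ) (d : ℝ → ℂ) : Prop :=
  MeasureTheory.IntegrableOn d (Set.Ioc 0 T) ∧
  ∀ t ∈ Set.Icc 0 T, φ t = ∫ s in Set.Ioc 0 t, d s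

/-- The rate function `I(φ) = ∫₀ᵀ (φ'(t)+1)²/(8 φ(t)) dt` for `φ ∈ D([0,T],ℂ)`
(conditions (H1),(H2),(H3)), and `+∞` otherwise.  For any admissible density `d = φ'`,
the realness condition (H3) gives `(φ'+1)²/(8φ) = (Re((φ'+1)/(2√φ)))²/2`. -/
noncomputable def rateI (T : ℝ) (φ : ℝ → ℂ) : ENNReal :=
  ⨅ (d : ℝ → ℂ) (_ : IsDensityOn T φ d ∧
      (∀ t ∈ Set.Ioc 0 T, offPosReal (φ t)) ∧
      (∀ᵐ t ∂(MeasureTheory.volume.restrict (Set.Ioc 0 T)),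
        ((d t + 1) / (2 * upSqrt (φ t))).im = 0) ∧
      MeasureTheory.MemLp (fun t => ((d t + 1) / (2 * upSqrt (φ t))).re) 2
        (MeasureTheory.volume.restrict (Set.Ioc 0 T))),
    ∫⁻ t in Set.Ioc 0 T, ENNReal.ofReal ((((d t + 1) / (2 * upSqrt (φ t))).re) ^ 2 / 2)

/-- Riemann–Stieltjes integral `∫₀ᵀ f da` in its integration-by-parts form
`f(T)a(T) - ∫₀ᵀ a(r) f'(r) dr` (for `a 0 = 0`). -/
noncomputable def RSint (T : ℝ) (f a : ℝ → ℝ) : ℝ :=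
  f T * a T - ∫ r in Set.Ioc 0 T, a r * deriv f r

/-- The functional `J_{f,g}(ξ)`. -/
noncomputable def Jfun (T : ℝ) (f g : ℝ → ℝ) (ξ : ℝ → ℂ) : ℝ :=
  (1 / 2) * (RSint T f (fun r => (ξ r).re + r) + RSint T g (fun r => (ξ r).im)) -
    (1 / 2) * ∫ r in Set.Ioc 0 T,
      (f r ^ 2 * (‖ξ r‖ + (ξ r).re) / 2 +
        g r ^ 2 * (‖ξ r‖ - (ξ r).re) / 2 + f r * g r * (ξ r).im)

lemma upSqrt_sq (z : ℂ) : upSqrt z ^ 2 = z := by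
  unfold upSqrt
  split_ifs with hz
  · rw [← Complex.ofReal_pow, Real.sq_sqrt hz.2]
    exact Complex.ext (by simp) (by simp [hz.1])
  · have hz0 : (-z) ≠ 0 := by
      intro hc
      exact hz (by simp [neg_eq_zero.mp hc])
    have h2 : ((-z) ^ ((1:ℂ)/2)) ^ 2 = -z := by
      rw [sq, ← Complex.cpow_add _ _ hz0]
      norm_num
    rw [mul_pow, Complex.I_sq, h2]
    ring

lemma upSqrt_zero : upSqrt 0 = 0 := by simp [upSqrt]

lemma abs_upSqrt (z : ℂ) : ‖upSqrt z‖ = Real.sqrt ‖z‖ := by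
  have h : ‖upSqrt z‖ ^ 2 = ‖z‖ := by
    rw [← norm_pow, upSqrt_sq]
  rw [← h, Real.sqrt_sq (by positivity)]

lemma continuousAt_upSqrt {w : ℂ} (hw : offPosReal w) : ContinuousAt upSqrt w := by
  have hopen : IsOpen {z : ℂ | offPosReal z} := by
    have hcl : IsClosed {z : ℂ | z.im = 0 ∧ 0 ≤ z.re} :=
      (isClosed_eq Complex.continuous_im continuous_const).inter
        (isClosed_le continuous_const Complex.continuous_re)
    exact hcl.isOpen_compl
  have hmem : -w ∈ Complex.slitPlane := by
    unfold offPosReal at hw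
    push_neg at hw
    by_cases him : w.im = 0
    · exact Or.inl (by simpa using hw him)
    · exact Or.inr (by simpa using him)
  have hca : ContinuousAt (fun z : ℂ => Complex.I * (-z) ^ ((1:ℂ)/2)) w := by
    exact continuousAt_const.mul
      ((continuousAt_cpow_const hmem).comp continuous_neg.continuousAt)
  apply hca.congr
  filter_upwards [hopen.mem_nhds hw] with z hz
  exact (if_neg hz).symm

lemma ibp_aux (T : ℝ) (hT : 0 < T) (w f : ℝ → ℝ) (hw : IntegrableOn w (Ioc 0 T))
    (hf : ContDiff ℝ 1 f) :
    ∫ r in Ioc 0 T, (∫ s in Ioc 0 r, w s) * deriv f r =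
      f T * (∫ s in Ioc 0 T, w s) - ∫ s in Ioc 0 T, f s * w s := by
  have hf' : Continuous (deriv f) := hf.continuous_deriv le_rfl
  have hfc : Continuous f := hf.continuous
  have hf'int : IntegrableOn (deriv f) (Ioc 0 T) := hf'.integrableOn_Ioc
  set μ := volume.restrict (Ioc 0 T) with hμ
  have hFint : Integrable (Function.uncurry fun r s =>
      if s ≤ r then deriv f r * w s else 0) (μ.prod μ) := by
    have h1 : Integrable (fun p : ℝ × ℝ => deriv f p.1 * w p.2) (μ.prod μ) :=
      hf'int.mul_prod hw
    have h2 : MeasurableSet {p : ℝ × ℝ | p.2 ≤ p.1} :=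
      (isClosed_le continuous_snd continuous_fst).measurableSet
    have := h1.indicator h2
    apply this.congr
    filter_upwards with p
    rw [Set.indicator_apply]
    rfl
  have key := integral_integral_swap hFint
  have hleft : ∀ r ∈ Ioc 0 T, (∫ s in Ioc 0 T, if s ≤ r then deriv f r * w s else 0)
      = (∫ s in Ioc 0 r, w s) * deriv f r := by
    intro r hr
    have heq : (fun s => if s ≤ r then deriv f r * w s else 0)
        = (Iic r).indicator (fun s => deriv f r * w s) := by
      funext s; simp [Set.indicator_apply, Set.mem_Iic]
    rw [heq, setIntegral_indicator measurableSet_Iic, Set.Ioc_inter_Iic,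
      min_eq_right hr.2, integral_const_mul]
    ring
  have hright : ∀ s ∈ Ioc 0 T, (∫ r in Ioc 0 T, if s ≤ r then deriv f r * w s else 0)
      = (f T - f s) * w s := by
    intro s hs
    have heq : (fun r => if s ≤ r then deriv f r * w s else 0)
        = (Ici s).indicator (fun r => deriv f r * w s) := by
      funext r; simp [Set.indicator_apply, Set.mem_Ici]
    have hset : Ioc 0 T ∩ Ici s = Icc s T := by
      ext r
      simp only [mem_inter_iff, mem_Ioc, mem_Ici, mem_Icc]
      constructor
      · rintro ⟨⟨_, h2⟩, h3⟩; exact ⟨h3, h2⟩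
      · rintro ⟨h1, h2⟩; exact ⟨⟨lt_of_lt_of_le hs.1 h1, h2⟩, h1⟩
    rw [heq, setIntegral_indicator measurableSet_Ici, hset, integral_mul_const,
      integral_Icc_eq_integral_Ioc, ← intervalIntegral.integral_of_le hs.2,
      intervalIntegral.integral_deriv_eq_sub
        (fun x _ => (hf.differentiable one_ne_zero).differentiableAt)
        (hf'.intervalIntegrable s T)]
  have hfw : IntegrableOn (fun s => f s * w s) (Ioc 0 T) := by
    obtain ⟨C, hC⟩ := isCompact_Icc.exists_bound_of_continuousOn (f := f)
      (s := Icc (0:ℝ) T) hfc.continuousOn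
    exact Integrable.bdd_mul hw hfc.aestronglyMeasurable.restrict
      (ae_restrict_of_forall_mem measurableSet_Ioc fun x hx => hC x (Ioc_subset_Icc_self hx))
  calc ∫ r in Ioc 0 T, (∫ s in Ioc 0 r, w s) * deriv f r
      = ∫ r in Ioc 0 T, ∫ s in Ioc 0 T, (if s ≤ r then deriv f r * w s else 0) :=
        (setIntegral_congr_fun measurableSet_Ioc fun r hr => (hleft r hr).symm)
    _ = ∫ s in Ioc 0 T, ∫ r in Ioc 0 T, (if s ≤ r then deriv f r * w s else 0) := key
    _ = ∫ s in Ioc 0 T, (f T - f s) * w s :=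
        setIntegral_congr_fun measurableSet_Ioc fun s hs => hright s hs
    _ = ∫ s in Ioc 0 T, (f T * w s - f s * w s) := by
        apply setIntegral_congr_fun measurableSet_Ioc
        intro s _; ring
    _ = f T * (∫ s in Ioc 0 T, w s) - ∫ s in Ioc 0 T, f s * w s := by
        rw [integral_sub (hw.const_mul (f T)) hfw, integral_const_mul]

/-- For `φ = φ^h` with `√(φ^h) = U + iV`, one has
`J_{f,g}(φ^h) = ∫₀ᵀ (fU+gV) h' dr − ½∫₀ᵀ (fU+gV)² dr ≤ ½∫₀ᵀ h'² dr`. -/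
theorem stmt8 (T : ℝ) (hT : 0 < T) (h : CM T) (φ : ℝ → ℂ) (hφ : IsPhiH T h φ)
    (U V : ℝ → ℝ)
    (hU : ∀ t, U t = (upSqrt (φ t)).re) (hV : ∀ t, V t = (upSqrt (φ t)).im)
    (f g : ℝ → ℝ) (hf : ContDiff ℝ 1 f) (hg : ContDiff ℝ 1 g) :
    Jfun T f g φ = (∫ r in Set.Ioc 0 T, (f r * U r + g r * V r) * h.dFun r)
        - (1 / 2) * ∫ r in Set.Ioc 0 T, (f r * U r + g r * V r) ^ 2 ∧
    Jfun T f g φ ≤ (1 / 2) * ∫ r in Set.Ioc 0 T, (h.dFun r) ^ 2 := by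
  obtain ⟨hφc, hφ0, hφoff, hφeq⟩ := hφ
  set u := h.dFun with hu
  haveI : IsFiniteMeasure (volume.restrict (Ioc (0:ℝ) T)) :=
    ⟨by rw [Measure.restrict_apply_univ]; exact measure_Ioc_lt_top⟩
  have hu_int : IntegrableOn u (Ioc 0 T) := h.memL2.integrable one_le_two
  have hu2_int : Integrable (fun r => u r ^ 2) (volume.restrict (Ioc 0 T)) :=
    h.memL2.integrable_sq
  -- continuity of upSqrt ∘ φ on [0,T]
  have hψcont : ContinuousOn (fun t => upSqrt (φ t)) (Icc 0 T) := by
    intro t ht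
    rcases eq_or_lt_of_le ht.1 with h0 | hpos
    · rw [← h0]
      have hnorm : Tendsto (fun s => ‖upSqrt (φ s)‖) (nhdsWithin 0 (Icc 0 T)) (nhds 0) := by
        have heqn : (fun s => ‖upSqrt (φ s)‖) = fun s => Real.sqrt ‖φ s‖ := by
          funext s; rw [abs_upSqrt]
        rw [heqn]
        have h2 : ContinuousWithinAt φ (Icc 0 T) 0 := hφc 0 (left_mem_Icc.mpr hT.le)
        have h3 : ContinuousWithinAt (fun s => Real.sqrt ‖φ s‖) (Icc 0 T) 0 :=
          ((Real.continuous_sqrt.comp continuous_norm).continuousAt).comp_continuousWithinAt h2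
        simpa [ContinuousWithinAt, hφ0] using h3
      have hval : upSqrt (φ 0) = 0 := by rw [hφ0, upSqrt_zero]
      have htd : Tendsto (fun t => upSqrt (φ t)) (nhdsWithin 0 (Icc 0 T)) (nhds 0) :=
        tendsto_zero_iff_norm_tendsto_zero.mpr hnorm
      simpa [ContinuousWithinAt, hval] using htd
    · exact (continuousAt_upSqrt (hφoff t ⟨hpos, ht.2⟩)).comp_continuousWithinAt (hφc t ht)
  have hψmeas : AEStronglyMeasurable (fun t => upSqrt (φ t)) (volume.restrict (Ioc 0 T)) :=
    (hψcont.mono Ioc_subset_Icc_self).aestronglyMeasurable measurableSet_Ioc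
  obtain ⟨C, hC⟩ := isCompact_Icc.exists_bound_of_continuousOn (s := Icc (0:ℝ) T) hψcont
  have hCae : ∀ᵐ x ∂(volume.restrict (Ioc 0 T)), ‖upSqrt (φ x)‖ ≤ C :=
    ae_restrict_of_forall_mem measurableSet_Ioc fun x hx => hC x (Ioc_subset_Icc_self hx)
  have hUmeas : AEStronglyMeasurable U (volume.restrict (Ioc 0 T)) := by
    rw [funext hU]
    exact Complex.continuous_re.comp_aestronglyMeasurable hψmeas
  have hVmeas : AEStronglyMeasurable V (volume.restrict (Ioc 0 T)) := by
    rw [funext hV]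
    exact Complex.continuous_im.comp_aestronglyMeasurable hψmeas
  have hUbd : ∀ x ∈ Icc 0 T, ‖U x‖ ≤ C := fun x hx => by
    rw [hU x, Real.norm_eq_abs]
    calc |(upSqrt (φ x)).re| ≤ ‖upSqrt (φ x)‖ := Complex.abs_re_le_norm _
      _ = ‖upSqrt (φ x)‖ := rfl
      _ ≤ C := hC x hx
  have hVbd : ∀ x ∈ Icc 0 T, ‖V x‖ ≤ C := fun x hx => by
    rw [hV x, Real.norm_eq_abs]
    calc |(upSqrt (φ x)).im| ≤ ‖upSqrt (φ x)‖ := Complex.abs_im_le_norm _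
      _ = ‖upSqrt (φ x)‖ := rfl
      _ ≤ C := hC x hx
  have hUae : ∀ᵐ x ∂(volume.restrict (Ioc 0 T)), ‖U x‖ ≤ C :=
    ae_restrict_of_forall_mem measurableSet_Ioc fun x hx => hUbd x (Ioc_subset_Icc_self hx)
  have hVae : ∀ᵐ x ∂(volume.restrict (Ioc 0 T)), ‖V x‖ ≤ C :=
    ae_restrict_of_forall_mem measurableSet_Ioc fun x hx => hVbd x (Ioc_subset_Icc_self hx)
  have hcx : IntegrableOn (fun s => upSqrt (φ s) * ((u s : ℝ) : ℂ)) (Ioc 0 T) :=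
    Integrable.bdd_mul hu_int.ofReal hψmeas hCae
  -- the two key absolutely-continuous representations
  have hRe : ∀ t ∈ Icc 0 T, (φ t).re + t = ∫ s in Ioc 0 t, 2 * (U s * u s) := by
    intro t ht
    have hint : IntegrableOn (fun s => upSqrt (φ s) * ((u s : ℝ) : ℂ)) (Ioc 0 t) :=
      hcx.mono_set (Ioc_subset_Ioc_right ht.2)
    have h5 : (∫ s in Ioc 0 t, upSqrt (φ s) * ((u s : ℝ) : ℂ)).re
        = ∫ s in Ioc 0 t, U s * u s := by
      have h6 := ContinuousLinearMap.integral_comp_comm Complex.reCLM hint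
      simp only [Complex.reCLM_apply] at h6
      rw [← h6]
      refine setIntegral_congr_fun measurableSet_Ioc fun s _ => ?_
      simp [Complex.mul_re, hU s]
    have hthis := congrArg Complex.re (hφeq t ht)
    simp only [Complex.add_re, Complex.neg_re, Complex.ofReal_re, Complex.mul_re,
      Complex.re_ofNat, Complex.im_ofNat, zero_mul, sub_zero, h5] at hthis
    rw [show (∫ s in Ioc 0 t, 2 * (U s * u s)) = 2 * ∫ s in Ioc 0 t, U s * u s from
      integral_const_mul 2 _]
    linarith
  have hIm : ∀ t ∈ Icc 0 T, (φ t).im = ∫ s in Ioc 0 t, 2 * (V s * u s) := by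
    intro t ht
    have hint : IntegrableOn (fun s => upSqrt (φ s) * ((u s : ℝ) : ℂ)) (Ioc 0 t) :=
      hcx.mono_set (Ioc_subset_Ioc_right ht.2)
    have h5 : (∫ s in Ioc 0 t, upSqrt (φ s) * ((u s : ℝ) : ℂ)).im
        = ∫ s in Ioc 0 t, V s * u s := by
      have h6 := ContinuousLinearMap.integral_comp_comm Complex.imCLM hint
      simp only [Complex.imCLM_apply] at h6
      rw [← h6]
      refine setIntegral_congr_fun measurableSet_Ioc fun s _ => ?_
      simp [Complex.mul_im, hV s]
    have hthis := congrArg Complex.im (hφeq t ht)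
    simp only [Complex.add_im, Complex.neg_im, Complex.ofReal_im, Complex.mul_im,
      Complex.re_ofNat, Complex.im_ofNat, zero_mul, add_zero, neg_zero, zero_add, h5] at hthis
    rw [show (∫ s in Ioc 0 t, 2 * (V s * u s)) = 2 * ∫ s in Ioc 0 t, V s * u s from
      integral_const_mul 2 _]
    linarith
  have hw1 : IntegrableOn (fun s => 2 * (U s * u s)) (Ioc 0 T) :=
    (Integrable.bdd_mul hu_int hUmeas hUae).const_mul 2
  have hw2 : IntegrableOn (fun s => 2 * (V s * u s)) (Ioc 0 T) :=
    (Integrable.bdd_mul hu_int hVmeas hVae).const_mul 2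
  -- RS integrals
  have hfU : RSint T f (fun r => (φ r).re + r) = ∫ s in Ioc 0 T, f s * (2 * (U s * u s)) := by
    have e0 : (φ T).re + T = ∫ s in Ioc 0 T, 2 * (U s * u s) :=
      hRe T (right_mem_Icc.mpr hT.le)
    have e1 : (∫ r in Ioc 0 T, ((φ r).re + r) * deriv f r)
        = ∫ r in Ioc 0 T, (∫ s in Ioc 0 r, 2 * (U s * u s)) * deriv f r :=
      setIntegral_congr_fun measurableSet_Ioc fun r hr => by
        rw [hRe r (Ioc_subset_Icc_self hr)]
    simp only [RSint]
    rw [e0, e1, ibp_aux T hT _ f hw1 hf]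
    ring
  have hgV : RSint T g (fun r => (φ r).im) = ∫ s in Ioc 0 T, g s * (2 * (V s * u s)) := by
    have e0 : (φ T).im = ∫ s in Ioc 0 T, 2 * (V s * u s) :=
      hIm T (right_mem_Icc.mpr hT.le)
    have e1 : (∫ r in Ioc 0 T, (φ r).im * deriv g r)
        = ∫ r in Ioc 0 T, (∫ s in Ioc 0 r, 2 * (V s * u s)) * deriv g r :=
      setIntegral_congr_fun measurableSet_Ioc fun r hr => by
        rw [hIm r (Ioc_subset_Icc_self hr)]
    simp only [RSint]
    rw [e0, e1, ibp_aux T hT _ g hw2 hg]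
    ring
  -- pointwise algebraic identities
  have hsq : ∀ r, upSqrt (φ r) ^ 2 = φ r := fun r => upSqrt_sq (φ r)
  have hre_pt : ∀ r, (φ r).re = U r ^ 2 - V r ^ 2 := by
    intro r
    have hh := congrArg Complex.re (hsq r)
    rw [sq, Complex.mul_re] at hh
    rw [hU r, hV r, ← hh]; ring
  have him_pt : ∀ r, (φ r).im = 2 * (U r * V r) := by
    intro r
    have hh := congrArg Complex.im (hsq r)
    rw [sq, Complex.mul_im] at hh
    rw [hU r, hV r, ← hh]; ring
  have habs_pt : ∀ r, ‖φ r‖ = U r ^ 2 + V r ^ 2 := by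
    intro r
    have hh := congrArg (‖·‖) (hsq r)
    rw [norm_pow, Complex.sq_norm, Complex.normSq_apply] at hh
    rw [hU r, hV r, ← hh]; ring
  have h3 : (∫ r in Ioc 0 T, (f r ^ 2 * (‖φ r‖ + (φ r).re) / 2 +
        g r ^ 2 * (‖φ r‖ - (φ r).re) / 2 + f r * g r * (φ r).im))
      = ∫ r in Ioc 0 T, (f r * U r + g r * V r) ^ 2 :=
    setIntegral_congr_fun measurableSet_Ioc fun r _ => by
      rw [habs_pt r, hre_pt r, him_pt r]; ring
  -- bounds for f and g
  obtain ⟨Cf, hCf⟩ := isCompact_Icc.exists_bound_of_continuousOn (s := Icc (0:ℝ) T)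
    hf.continuous.continuousOn
  obtain ⟨Cg, hCg⟩ := isCompact_Icc.exists_bound_of_continuousOn (s := Icc (0:ℝ) T)
    hg.continuous.continuousOn
  have hfae : ∀ᵐ x ∂(volume.restrict (Ioc 0 T)), ‖f x‖ ≤ Cf :=
    ae_restrict_of_forall_mem measurableSet_Ioc fun x hx => hCf x (Ioc_subset_Icc_self hx)
  have hgae : ∀ᵐ x ∂(volume.restrict (Ioc 0 T)), ‖g x‖ ≤ Cg :=
    ae_restrict_of_forall_mem measurableSet_Ioc fun x hx => hCg x (Ioc_subset_Icc_self hx)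
  have hint1 : IntegrableOn (fun s => f s * (2 * (U s * u s))) (Ioc 0 T) :=
    Integrable.bdd_mul hw1 hf.continuous.aestronglyMeasurable.restrict hfae
  have hint2 : IntegrableOn (fun s => g s * (2 * (V s * u s))) (Ioc 0 T) :=
    Integrable.bdd_mul hw2 hg.continuous.aestronglyMeasurable.restrict hgae
  -- main equality
  have hmain : Jfun T f g φ = (∫ r in Ioc 0 T, (f r * U r + g r * V r) * u r)
      - (1 / 2) * ∫ r in Ioc 0 T, (f r * U r + g r * V r) ^ 2 := by
    unfold Jfun
    rw [hfU, hgV, h3]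
    congr 1
    rw [← integral_add hint1 hint2, ← integral_const_mul]
    refine setIntegral_congr_fun measurableSet_Ioc fun s _ => ?_
    ring
  refine ⟨hmain, ?_⟩
  rw [hmain]
  -- integrability of A, A², A·u
  have hAmeas : AEStronglyMeasurable (fun r => f r * U r + g r * V r)
      (volume.restrict (Ioc 0 T)) :=
    (hf.continuous.aestronglyMeasurable.restrict.mul hUmeas).add
      (hg.continuous.aestronglyMeasurable.restrict.mul hVmeas)
  have hAbd : ∀ᵐ r ∂(volume.restrict (Ioc 0 T)),
      ‖f r * U r + g r * V r‖ ≤ Cf * C + Cg * C := by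
    refine ae_restrict_of_forall_mem measurableSet_Ioc fun r hr => ?_
    have h1 := hCf r (Ioc_subset_Icc_self hr)
    have h2 := hUbd r (Ioc_subset_Icc_self hr)
    have h3' := hCg r (Ioc_subset_Icc_self hr)
    have h4 := hVbd r (Ioc_subset_Icc_self hr)
    calc ‖f r * U r + g r * V r‖ ≤ ‖f r * U r‖ + ‖g r * V r‖ := norm_add_le _ _
      _ = ‖f r‖ * ‖U r‖ + ‖g r‖ * ‖V r‖ := by rw [norm_mul, norm_mul]
      _ ≤ Cf * C + Cg * C := by
          gcongr <;> first | exact (norm_nonneg _).trans h1 | exact (norm_nonneg _).trans h3' | assumption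
  have hAint : Integrable (fun r => f r * U r + g r * V r) (volume.restrict (Ioc 0 T)) := by
    have := Integrable.bdd_mul (integrable_const (1:ℝ)) hAmeas hAbd
    simpa using this
  have hA2 : Integrable (fun r => (f r * U r + g r * V r) ^ 2) (volume.restrict (Ioc 0 T)) := by
    have := Integrable.bdd_mul hAint hAmeas hAbd
    refine this.congr ?_
    filter_upwards with r
    ring
  have hAu : Integrable (fun r => (f r * U r + g r * V r) * u r) (volume.restrict (Ioc 0 T)) :=
    Integrable.bdd_mul hu_int hAmeas hAbd
  have key : ∫ r in Ioc 0 T, ((f r * U r + g r * V r) * u r - (f r * U r + g r * V r) ^ 2 / 2)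
      ≤ ∫ r in Ioc 0 T, u r ^ 2 / 2 :=
    integral_mono (hAu.sub (hA2.div_const 2)) (hu2_int.div_const 2)
      (fun r => by nlinarith [sq_nonneg (f r * U r + g r * V r - u r)])
  rw [integral_sub hAu (hA2.div_const 2), integral_div, integral_div] at key
  linarith
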